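/- Let n be a natural number and let S, T be subspaces of ℂⁿ. Then dim α(S,T) ≤ ⌊n/2⌋, i.e., finrank ℂ (((T ⊔ Sᗮ) ⊓ S) ⊓ (S ⊓ T)ᗮ) ≤ n / 2 (natural number division). -/

import Mathlib

/-- `dim α(S,T) ≤ ⌊n/2⌋` where `α(S,T) = ((T ⊔ Sᗮ) ⊓ S) ⊓ (S ⊓ T)ᗮ`. -/
theorem stmt_6 (n : ℕ) (S T : Submodule ℂ (EuclideanSpace ℂ (Fin n))) :
    Module.finrank ℂ
        ((((T ⊔ Sᗮ) ⊓ S) ⊓ (S ⊓ T)ᗮ) : Submodule ℂ (EuclideanSpace ℂ (Fin n))) ≤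
      n / 2 := by
  classical
  have hn : Module.finrank ℂ (EuclideanSpace ℂ (Fin n)) = n := finrank_euclideanSpace_fin
  set A : Submodule ℂ (EuclideanSpace ℂ (Fin n)) := ((T ⊔ Sᗮ) ⊓ S) ⊓ (S ⊓ T)ᗮ with hA
  -- A and S ⊓ T are disjoint
  have hd1 : Disjoint A (S ⊓ T) :=
    ((S ⊓ T).orthogonal_disjoint.symm).mono_left inf_le_right
  have hA_le_P : A ≤ (T ⊔ Sᗮ) ⊓ S := inf_le_left
  have hST_le_P : S ⊓ T ≤ (T ⊔ Sᗮ) ⊓ S :=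
    le_inf (le_trans inf_le_right le_sup_left) inf_le_left
  -- finrank of disjoint sup adds
  have hsum1 : Module.finrank ℂ (A ⊔ (S ⊓ T) : Submodule ℂ (EuclideanSpace ℂ (Fin n)))
      = Module.finrank ℂ A + Module.finrank ℂ (S ⊓ T : Submodule ℂ (EuclideanSpace ℂ (Fin n))) := by
    rw [← Submodule.finrank_sup_add_finrank_inf_eq A (S ⊓ T), hd1.eq_bot, finrank_bot,
      add_zero]
  -- bound B : dim A + dim (S⊓T) ≤ dim P
  have hB : Module.finrank ℂ A + Module.finrank ℂ (S ⊓ T : Submodule ℂ (EuclideanSpace ℂ (Fin n)))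
      ≤ Module.finrank ℂ ((T ⊔ Sᗮ) ⊓ S : Submodule ℂ (EuclideanSpace ℂ (Fin n))) := by
    rw [← hsum1]
    exact Submodule.finrank_mono (sup_le hA_le_P hST_le_P)
  -- A ⊔ (S ⊓ T) is orthogonal to S ⊓ Tᗮ
  have hT_le : T ≤ (S ⊓ Tᗮ)ᗮ :=
    le_trans (Submodule.le_orthogonal_orthogonal T)
      (Submodule.orthogonal_le inf_le_right)
  have hsup_le : T ⊔ Sᗮ ≤ (S ⊓ Tᗮ)ᗮ :=
    sup_le hT_le (Submodule.orthogonal_le inf_le_left)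
  have hA_le2 : A ≤ (S ⊓ Tᗮ)ᗮ := le_trans (le_trans inf_le_left inf_le_left) hsup_le
  have hST_le2 : S ⊓ T ≤ (S ⊓ Tᗮ)ᗮ := le_trans inf_le_right hT_le
  have hd2 : Disjoint (A ⊔ (S ⊓ T)) (S ⊓ Tᗮ) :=
    ((S ⊓ Tᗮ).orthogonal_disjoint.symm).mono_left (sup_le hA_le2 hST_le2)
  have hsum2 : Module.finrank ℂ ((A ⊔ (S ⊓ T)) ⊔ (S ⊓ Tᗮ) : Submodule ℂ (EuclideanSpace ℂ (Fin n)))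
      = Module.finrank ℂ (A ⊔ (S ⊓ T) : Submodule ℂ (EuclideanSpace ℂ (Fin n)))
        + Module.finrank ℂ (S ⊓ Tᗮ : Submodule ℂ (EuclideanSpace ℂ (Fin n))) := by
    rw [← Submodule.finrank_sup_add_finrank_inf_eq (A ⊔ (S ⊓ T)) (S ⊓ Tᗮ), hd2.eq_bot,
      finrank_bot, add_zero]
  -- bound A : dim A + dim (S⊓T) + dim (S⊓Tᗮ) ≤ dim S
  have hAle : Module.finrank ℂ A + Module.finrank ℂ (S ⊓ T : Submodule ℂ (EuclideanSpace ℂ (Fin n)))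
      + Module.finrank ℂ (S ⊓ Tᗮ : Submodule ℂ (EuclideanSpace ℂ (Fin n))) ≤ Module.finrank ℂ S := by
    rw [← hsum1, ← hsum2]
    exact Submodule.finrank_mono
      (sup_le (sup_le (le_trans hA_le_P inf_le_right) inf_le_left) inf_le_left)
  -- dimension equations
  have e1 : Module.finrank ℂ (T ⊔ Sᗮ : Submodule ℂ (EuclideanSpace ℂ (Fin n)))
      + Module.finrank ℂ (T ⊓ Sᗮ : Submodule ℂ (EuclideanSpace ℂ (Fin n)))
      = Module.finrank ℂ T + Module.finrank ℂ Sᗮ :=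
    Submodule.finrank_sup_add_finrank_inf_eq T Sᗮ
  have e2 : Module.finrank ℂ ((T ⊔ Sᗮ) ⊔ S : Submodule ℂ (EuclideanSpace ℂ (Fin n)))
      + Module.finrank ℂ ((T ⊔ Sᗮ) ⊓ S : Submodule ℂ (EuclideanSpace ℂ (Fin n)))
      = Module.finrank ℂ (T ⊔ Sᗮ : Submodule ℂ (EuclideanSpace ℂ (Fin n)))
        + Module.finrank ℂ S :=
    Submodule.finrank_sup_add_finrank_inf_eq (T ⊔ Sᗮ) S
  have e3 : Module.finrank ℂ S + Module.finrank ℂ Sᗮ = n := by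
    have h := S.finrank_add_finrank_orthogonal
    omega
  have e4 : (T ⊔ Sᗮ) ⊔ S = ⊤ := by
    rw [eq_top_iff, ← Submodule.sup_orthogonal_of_hasOrthogonalProjection (K := S)]
    exact sup_le le_sup_right (le_trans le_sup_right le_sup_left)
  have e4' : Module.finrank ℂ ((T ⊔ Sᗮ) ⊔ S : Submodule ℂ (EuclideanSpace ℂ (Fin n))) = n := by
    rw [e4]
    have h := finrank_top ℂ (EuclideanSpace ℂ (Fin n))
    omega
  have c1 : Module.finrank ℂ (S ⊔ T : Submodule ℂ (EuclideanSpace ℂ (Fin n)))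
      + Module.finrank ℂ (S ⊓ T : Submodule ℂ (EuclideanSpace ℂ (Fin n)))
      = Module.finrank ℂ S + Module.finrank ℂ T :=
    Submodule.finrank_sup_add_finrank_inf_eq S T
  have c2 : Module.finrank ℂ (S ⊔ T : Submodule ℂ (EuclideanSpace ℂ (Fin n))) ≤ n := by
    have h := Submodule.finrank_le (S ⊔ T : Submodule ℂ (EuclideanSpace ℂ (Fin n)))
    omega
  omega
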